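/- Let F₂ be the free group on two generators g₁, g₂, let ξ ∈ ℓ²(F₂) with ∑_{g∈F₂} |ξ(g)|² = 1, and let ε > 0. For T ⊆ F₂ write μ(T) = ∑_{g∈T} |ξ(g)|². Let S ⊆ F₂ be the set consisting of the identity together with all elements whose reduced word ends in a nonzero power of g₁. If ∑_{g∈F₂} |ξ(g₁⁻¹ g g₂) − ξ(g)|² < ε², ∑_{g∈F₂} |ξ(g₁ g g₂⁻¹) − ξ(g)|² < ε², and ∑_{g∈F₂} |ξ(g₂⁻¹ g g₁) − ξ(g)|² < ε², then 1/2 − ε < μ(S) < (1 + 4ε)/3. -/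

import Mathlib

open scoped ENNReal

section AnalyticHelpers

lemma rpow_two_eq (x : ℝ) : x ^ ((2:ℝ≥0∞).toReal) = x ^ (2:ℕ) := by
  rw [ENNReal.toReal_ofNat, show ((2:ℝ):ℝ) = ((2:ℕ):ℝ) by norm_num, Real.rpow_natCast]

lemma sqrt_tsum_triangle {α : Type*} (f h : α → ℂ)
    (hf : Summable fun g => ‖f g‖ ^ 2) (hh : Summable fun g => ‖h g‖ ^ 2) :
    Real.sqrt (∑' g, ‖f g‖ ^ 2) ≤
      Real.sqrt (∑' g, ‖h g‖ ^ 2) + Real.sqrt (∑' g, ‖f g - h g‖ ^ 2) := by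
  have hf' : Memℓp f 2 := memℓp_gen (by
    apply hf.congr; intro g; rw [rpow_two_eq])
  have hh' : Memℓp h 2 := memℓp_gen (by
    apply hh.congr; intro g; rw [rpow_two_eq])
  set A : lp (fun _ : α => ℂ) 2 := ⟨f, hf'⟩
  set B : lp (fun _ : α => ℂ) 2 := ⟨h, hh'⟩
  have hp : 0 < (2:ℝ≥0∞).toReal := by norm_num
  have normeq : ∀ C : lp (fun _ : α => ℂ) 2, ‖C‖ = Real.sqrt (∑' g, ‖C g‖ ^ 2) := by
    intro C
    have h2 := lp.norm_rpow_eq_tsum hp C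
    rw [rpow_two_eq] at h2
    rw [← Real.sqrt_sq (norm_nonneg C), h2]
    congr 1
    exact tsum_congr fun g => rpow_two_eq _
  have key : ‖A‖ ≤ ‖B‖ + ‖A - B‖ := by
    have := norm_sub_norm_le A B
    linarith
  have hAB : ∀ g, (A - B) g = f g - h g := by
    intro g; simp [A, B]; rfl
  rw [normeq A, normeq B, normeq (A - B)] at key
  simpa [hAB] using key

end AnalyticHelpers

/-- The free group `F₂` on two generators. -/
abbrev F₂ : Type := FreeGroup (Fin 2)

/-- The first generator `g₁` of `F₂`. -/
def g₁ : F₂ := FreeGroup.of 0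

/-- The second generator `g₂` of `F₂`. -/
def g₂ : F₂ := FreeGroup.of 1

/-- The set `S ⊆ F₂` consisting of the identity element together with all elements whose
reduced word ends in a nonzero power of `g₁`, i.e. whose last letter is `g₁` or `g₁⁻¹`. -/
def S : Set F₂ := {w | w = 1 ∨ ∃ b : Bool, w.toWord.getLast? = some ((0 : Fin 2), b)}

namespace MuBoundsAux
open FreeGroup

/-! ### Word combinatorics -/

lemma of_eq_mk (a : Fin 2) : FreeGroup.of a = FreeGroup.mk [(a, true)] := rfl

lemma inv_of_eq_mk (a : Fin 2) : (FreeGroup.of a)⁻¹ = FreeGroup.mk [(a, false)] := by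
  rw [of_eq_mk, FreeGroup.inv_mk]
  simp [FreeGroup.invRev]

-- left multiplication by a single letter
lemma toWord_single_mul (x : Fin 2 × Bool) (w : F₂) :
    (FreeGroup.mk [x] * w).toWord =
      List.casesOn w.toWord [x] fun hd tl =>
        if x.1 = hd.1 ∧ x.2 = !hd.2 then tl else x :: hd :: tl := by
  conv_lhs => rw [← FreeGroup.mk_toWord (x := w)]
  rw [FreeGroup.mul_mk, FreeGroup.toWord_mk, List.singleton_append, FreeGroup.reduce.cons,
    ← FreeGroup.toWord_mk, FreeGroup.mk_toWord]

-- L3 : left multiplication by a letter preserves the last letter, provided it isn't x⁻¹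
lemma getLast_single_mul (x y : Fin 2 × Bool) (w : F₂)
    (h : w.toWord.getLast? = some y) (hxy : y ≠ (x.1, !x.2)) :
    (FreeGroup.mk [x] * w).toWord.getLast? = some y := by
  rw [toWord_single_mul]
  rcases hw : w.toWord with _ | ⟨hd, tl⟩
  · rw [hw] at h; simp at h
  · rw [hw] at h
    show (if x.1 = hd.1 ∧ x.2 = !hd.2 then tl else x :: hd :: tl).getLast? = some y
    by_cases hc : x.1 = hd.1 ∧ x.2 = !hd.2
    · rw [if_pos hc]
      rcases htl : tl with _ | ⟨a, l⟩
      · rw [htl] at h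
        simp at h
        exfalso
        apply hxy
        rw [← h]
        obtain ⟨h1, h2⟩ := hc
        rw [Prod.ext_iff]
        exact ⟨h1.symm, by simp [h2]⟩
      · rw [htl] at h
        rw [List.getLast?_cons_cons] at h
        exact h
    · rw [if_neg hc]
      rcases htl : tl with _ | ⟨a, l⟩
      · rw [htl] at h; simpa using h
      · rw [htl] at h
        rw [List.getLast?_cons_cons] at h ⊢
        rw [List.getLast?_cons_cons]
        exact h

-- right multiplication: append
lemma toWord_mul_single (w : F₂) (x : Fin 2 × Bool)
    (h : w.toWord.getLast? ≠ some (x.1, !x.2)) :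
    (w * FreeGroup.mk [x]).toWord = w.toWord ++ [x] := by
  have inv_single : (FreeGroup.mk [x])⁻¹ = FreeGroup.mk [(x.1, !x.2)] := by
    rw [FreeGroup.inv_mk]; simp [FreeGroup.invRev]
  have invRev_cons : ∀ (a : Fin 2 × Bool) (L : List (Fin 2 × Bool)),
      FreeGroup.invRev (a :: L) = FreeGroup.invRev L ++ [(a.1, !a.2)] := by
    intro a L; simp [FreeGroup.invRev]
  have key : ((w * FreeGroup.mk [x])⁻¹).toWord = (x.1, !x.2) :: (w⁻¹).toWord := by
    rw [mul_inv_rev, inv_single, toWord_single_mul]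
    rcases hL : (w⁻¹).toWord with _ | ⟨hd, tl⟩
    · rfl
    · show (if (x.1, !x.2).1 = hd.1 ∧ (x.1, !x.2).2 = !hd.2 then tl
        else (x.1, !x.2) :: hd :: tl) = (x.1, !x.2) :: hd :: tl
      rw [if_neg]
      rintro ⟨h1, h2⟩
      apply h
      have hw : w.toWord = FreeGroup.invRev tl ++ [(hd.1, !hd.2)] := by
        have h3 := FreeGroup.toWord_inv w
        rw [hL] at h3
        have h4 : w.toWord = FreeGroup.invRev (hd :: tl) := by
          rw [← FreeGroup.invRev_invRev (L₁ := w.toWord), ← h3]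
        rw [h4, invRev_cons]
      rw [hw, List.getLast?_concat]
      simp only at h1 h2
      have h5 : x.2 = hd.2 := by simpa using h2
      simp [← h1, ← h5]
  have final : (w * FreeGroup.mk [x]).toWord
      = FreeGroup.invRev ((x.1, !x.2) :: (w⁻¹).toWord) := by
    rw [← key, FreeGroup.toWord_inv, FreeGroup.invRev_invRev]
  rw [final, invRev_cons, FreeGroup.toWord_inv, FreeGroup.invRev_invRev]
  simp

lemma getLast_mul_single (w : F₂) (x : Fin 2 × Bool)
    (h : w.toWord.getLast? ≠ some (x.1, !x.2)) :
    (w * FreeGroup.mk [x]).toWord.getLast? = some x := by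
  rw [toWord_mul_single w x h, List.getLast?_concat]

lemma fin2_cases (i : Fin 2) : i = 0 ∨ i = 1 := by omega

lemma not_mem_S_iff (w : F₂) :
    w ∉ S ↔ ∃ b, w.toWord.getLast? = some ((1 : Fin 2), b) := by
  constructor
  · intro hw
    simp only [S, Set.mem_setOf_eq, not_or] at hw
    obtain ⟨h1, h2⟩ := hw
    have hne : w.toWord ≠ [] := fun h => h1 (FreeGroup.toWord_eq_nil_iff.mp h)
    obtain ⟨y, hy⟩ := Option.isSome_iff_exists.mp (List.getLast?_isSome.mpr hne)
    rcases fin2_cases y.1 with h0 | h0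
    · exfalso
      exact h2 ⟨y.2, by rw [hy]; congr 1; rw [← h0]⟩
    · exact ⟨y.2, by rw [hy]; congr 1; rw [← h0]⟩
  · rintro ⟨b, hb⟩
    simp only [S, Set.mem_setOf_eq, not_or]
    constructor
    · intro h1
      rw [h1, FreeGroup.toWord_one] at hb
      simp at hb
    · rintro ⟨b', hb'⟩
      rw [hb] at hb'
      simp [Prod.ext_iff] at hb'

lemma ends_snd_mul (s : F₂) (hs : s ∈ S) (b : Bool) :
    (s * FreeGroup.mk [((1 : Fin 2), b)]).toWord.getLast? = some ((1 : Fin 2), b) := by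
  apply getLast_mul_single
  rcases hs with h1 | ⟨b', hb'⟩
  · rw [h1, FreeGroup.toWord_one]; simp
  · rw [hb']
    simp [Prod.ext_iff]

lemma left_fst_preserves (c c' : Bool) (w : F₂)
    (h : w.toWord.getLast? = some ((1 : Fin 2), c)) :
    (FreeGroup.mk [((0 : Fin 2), c')] * w).toWord.getLast? = some ((1 : Fin 2), c) := by
  apply getLast_single_mul _ _ _ h
  simp [Prod.ext_iff]

lemma factA (g : F₂) (hg : g ∉ S) : g₂ * g * g₁⁻¹ ∈ S := by
  obtain ⟨b, hb⟩ := (not_mem_S_iff g).mp hg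
  have e1 : (g * FreeGroup.mk [((0:Fin 2), false)]).toWord
      = g.toWord ++ [((0:Fin 2), false)] := by
    apply toWord_mul_single
    rw [hb]; simp [Prod.ext_iff]
  have e2 : (g * FreeGroup.mk [((0:Fin 2), false)]).toWord.getLast?
      = some ((0:Fin 2), false) := by rw [e1, List.getLast?_concat]
  have e3 : (FreeGroup.mk [((1:Fin 2), true)] * (g * FreeGroup.mk [((0:Fin 2), false)])).toWord.getLast?
      = some ((0:Fin 2), false) := by
    apply getLast_single_mul _ _ _ e2
    simp [Prod.ext_iff]
  have heq : g₂ * g * g₁⁻¹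
      = FreeGroup.mk [((1:Fin 2), true)] * (g * FreeGroup.mk [((0:Fin 2), false)]) := by
    rw [g₂, g₁, inv_of_eq_mk, of_eq_mk, mul_assoc]
  right
  exact ⟨false, by rw [heq]; exact e3⟩

lemma factB (s : F₂) (hs : s ∈ S) : g₁⁻¹ * s * g₂ ∉ S := by
  rw [not_mem_S_iff]
  refine ⟨true, ?_⟩
  have heq : g₁⁻¹ * s * g₂
      = FreeGroup.mk [((0:Fin 2), false)] * (s * FreeGroup.mk [((1:Fin 2), true)]) := by
    rw [g₂, g₁, inv_of_eq_mk, of_eq_mk, mul_assoc]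
  rw [heq]
  exact left_fst_preserves _ _ _ (ends_snd_mul s hs true)

lemma factB' (s : F₂) (hs : s ∈ S) : g₁ * s * g₂⁻¹ ∉ S := by
  rw [not_mem_S_iff]
  refine ⟨false, ?_⟩
  have heq : g₁ * s * g₂⁻¹
      = FreeGroup.mk [((0:Fin 2), true)] * (s * FreeGroup.mk [((1:Fin 2), false)]) := by
    rw [g₂, g₁, inv_of_eq_mk, of_eq_mk, mul_assoc]
  rw [heq]
  exact left_fst_preserves _ _ _ (ends_snd_mul s hs false)

lemma factC (s : F₂) (hs : s ∈ S) : g₁⁻¹ * (g₁⁻¹ * s * g₂) * g₂ ∉ S := by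
  rw [not_mem_S_iff]
  refine ⟨true, ?_⟩
  have heq : g₁⁻¹ * (g₁⁻¹ * s * g₂) * g₂
      = FreeGroup.mk [((0:Fin 2), false)] * (FreeGroup.mk [((0:Fin 2), false)] *
          ((s * FreeGroup.mk [((1:Fin 2), true)]) * FreeGroup.mk [((1:Fin 2), true)])) := by
    rw [g₂, g₁, inv_of_eq_mk, of_eq_mk]
    group
  rw [heq]
  apply left_fst_preserves
  apply left_fst_preserves
  apply getLast_mul_single
  rw [ends_snd_mul s hs true]
  simp


/-! ### Measure estimates -/

variable (ξ : F₂ → ℂ)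

/-- `∑' g : T, ‖ξ g‖ ^ 2 ≤ 1` for any subset. -/
lemma mu_le_one (hsum : Summable fun g => ‖ξ g‖ ^ 2) (hξ : ∑' g, ‖ξ g‖ ^ 2 = 1)
    (T : Set F₂) : (∑' g : T, ‖ξ g‖ ^ 2) ≤ 1 := by
  rw [← hξ]
  exact Summable.tsum_subtype_le _ T (fun a => by positivity) hsum

/-- the key almost-invariance comparison -/
lemma close (hsum : Summable fun g => ‖ξ g‖ ^ 2) (hξ : ∑' g, ‖ξ g‖ ^ 2 = 1)
    (α : F₂ ≃ F₂) (T : Set F₂) :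
    |(∑' s : T, ‖ξ (α s)‖ ^ 2) - ∑' s : T, ‖ξ s‖ ^ 2| ≤
      2 * Real.sqrt (∑' g, ‖ξ (α g) - ξ g‖ ^ 2) := by
  have hsumα : Summable fun g => ‖ξ (α g)‖ ^ 2 :=
    (Equiv.summable_iff α (f := fun g => ‖ξ g‖ ^ 2)).mpr hsum
  have hξα : ∑' g, ‖ξ (α g)‖ ^ 2 = 1 := by
    rw [Equiv.tsum_eq α (fun g => ‖ξ g‖ ^ 2)]; exact hξ
  have hd_sum : Summable fun g => ‖ξ (α g) - ξ g‖ ^ 2 := by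
    apply Summable.of_nonneg_of_le (fun g => by positivity)
      (fun g => ?_) ((hsumα.add hsum).mul_left 2)
    have h1 := norm_sub_le (ξ (α g)) (ξ g)
    have h2 := norm_nonneg (ξ (α g))
    have h3 := norm_nonneg (ξ g)
    have h4 := norm_nonneg (ξ (α g) - ξ g)
    nlinarith [pow_le_pow_left₀ h4 h1 2, sq_nonneg (‖ξ (α g)‖ - ‖ξ g‖)]
  have hfT : Summable fun s : T => ‖ξ (α s)‖ ^ 2 := hsumα.subtype T
  have hhT : Summable fun s : T => ‖ξ (s : F₂)‖ ^ 2 := hsum.subtype T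
  have tri1 := sqrt_tsum_triangle (fun s : T => ξ (α s)) (fun s : T => ξ s) hfT hhT
  have tri2 := sqrt_tsum_triangle (fun s : T => ξ s) (fun s : T => ξ (α s)) hhT hfT
  have hsub : (∑' s : T, ‖ξ (α s) - ξ (s : F₂)‖ ^ 2) ≤ ∑' g, ‖ξ (α g) - ξ g‖ ^ 2 :=
    Summable.tsum_subtype_le _ T (fun a => by positivity) hd_sum
  have hsub' : (∑' s : T, ‖ξ (s : F₂) - ξ (α s)‖ ^ 2) ≤ ∑' g, ‖ξ (α g) - ξ g‖ ^ 2 := by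
    calc (∑' s : T, ‖ξ (s : F₂) - ξ (α s)‖ ^ 2)
        = ∑' s : T, ‖ξ (α s) - ξ (s : F₂)‖ ^ 2 := by
          apply tsum_congr; intro s; rw [norm_sub_rev]
      _ ≤ _ := hsub
  set ν := ∑' s : T, ‖ξ (α s)‖ ^ 2 with hν
  set m := ∑' s : T, ‖ξ (s : F₂)‖ ^ 2 with hm
  set δ := Real.sqrt (∑' g, ‖ξ (α g) - ξ g‖ ^ 2) with hδ
  have hν0 : 0 ≤ ν := tsum_nonneg fun s => by positivity
  have hm0 : 0 ≤ m := tsum_nonneg fun s => by positivity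
  have hν1 : ν ≤ 1 := by
    rw [hν, ← hξα]
    exact Summable.tsum_subtype_le _ T (fun a => by positivity) hsumα
  have hm1 : m ≤ 1 := mu_le_one ξ hsum hξ T
  have hδ0 : 0 ≤ δ := Real.sqrt_nonneg _
  have sν1 : Real.sqrt ν ≤ 1 := Real.sqrt_le_one.mpr hν1
  have sm1 : Real.sqrt m ≤ 1 := Real.sqrt_le_one.mpr hm1
  have e1 : Real.sqrt ν ≤ Real.sqrt m + δ := by
    refine tri1.trans ?_
    gcongr
    exact Real.sqrt_le_sqrt hsub
  have e2 : Real.sqrt m ≤ Real.sqrt ν + δ := by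
    refine tri2.trans ?_
    gcongr
    exact Real.sqrt_le_sqrt hsub'
  have qν : Real.sqrt ν ^ 2 = ν := Real.sq_sqrt hν0
  have qm : Real.sqrt m ^ 2 = m := Real.sq_sqrt hm0
  rw [abs_sub_le_iff]
  constructor <;> nlinarith [Real.sqrt_nonneg ν, Real.sqrt_nonneg m]

/-- reindexing a subtype sum along an equivalence -/
lemma tsum_image_eq (α : F₂ ≃ F₂) (T : Set F₂) :
    (∑' g : (α '' T : Set F₂), ‖ξ g‖ ^ 2) = ∑' s : T, ‖ξ (α s)‖ ^ 2 := by
  rw [← Equiv.tsum_eq (Equiv.image α T) (fun g : (α '' T : Set F₂) => ‖ξ (g : F₂)‖ ^ 2)]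
  apply tsum_congr
  intro s
  simp

end MuBoundsAux

open MuBoundsAux in
/-- The estimate on `μ(S)` derived from the almost-invariance conditions (2.10) in Example 2.6
of Magajna, "Pointwise approximation by elementary complete contractions": if `ξ` is a unit
vector of `ℓ²(F₂)` which is `ε`-almost invariant for the three twisted translations, then
`1/2 - ε < μ(S) < (1 + 4ε)/3`, where `μ(T) = ∑_{g ∈ T} |ξ(g)|²`. -/
theorem mu_S_bounds_of_almost_invariance
    (ξ : F₂ → ℂ) (hsum : Summable fun g => ‖ξ g‖ ^ 2) (hξ : ∑' g, ‖ξ g‖ ^ 2 = 1)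
    (ε : ℝ) (hε : 0 < ε)
    (h1 : ∑' g : F₂, ‖ξ (g₁⁻¹ * g * g₂) - ξ g‖ ^ 2 < ε ^ 2)
    (h2 : ∑' g : F₂, ‖ξ (g₁ * g * g₂⁻¹) - ξ g‖ ^ 2 < ε ^ 2)
    (h3 : ∑' g : F₂, ‖ξ (g₂⁻¹ * g * g₁) - ξ g‖ ^ 2 < ε ^ 2) :
    1 / 2 - ε < (∑' g : S, ‖ξ g‖ ^ 2) ∧ (∑' g : S, ‖ξ g‖ ^ 2) < (1 + 4 * ε) / 3 := by
  classical
  -- the three twisted translations as equivalences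
  let α₁ : F₂ ≃ F₂ := (Equiv.mulLeft g₁⁻¹).trans (Equiv.mulRight g₂)
  let α₂ : F₂ ≃ F₂ := (Equiv.mulLeft g₁).trans (Equiv.mulRight g₂⁻¹)
  let α₃ : F₂ ≃ F₂ := (Equiv.mulLeft g₂⁻¹).trans (Equiv.mulRight g₁)
  have hα₁ : ∀ g, α₁ g = g₁⁻¹ * g * g₂ := fun g => rfl
  have hα₂ : ∀ g, α₂ g = g₁ * g * g₂⁻¹ := fun g => rfl
  have hα₃ : ∀ g, α₃ g = g₂⁻¹ * g * g₁ := fun g => rfl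
  set m := ∑' g : S, ‖ξ g‖ ^ 2 with hm
  have hm0 : 0 ≤ m := tsum_nonneg fun s => by positivity
  -- distances
  set δ₁ := Real.sqrt (∑' g, ‖ξ (α₁ g) - ξ g‖ ^ 2) with hδ₁
  set δ₂ := Real.sqrt (∑' g, ‖ξ (α₂ g) - ξ g‖ ^ 2) with hδ₂
  set δ₃ := Real.sqrt (∑' g, ‖ξ (α₃ g) - ξ g‖ ^ 2) with hδ₃
  have hδ₁ε : δ₁ < ε := by
    rw [hδ₁]
    rw [Real.sqrt_lt' hε]
    simpa only [hα₁] using h1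
  have hδ₂ε : δ₂ < ε := by
    rw [hδ₂, Real.sqrt_lt' hε]
    simpa only [hα₂] using h2
  have hδ₃ε : δ₃ < ε := by
    rw [hδ₃, Real.sqrt_lt' hε]
    simpa only [hα₃] using h3
  have hδ₁0 : 0 ≤ δ₁ := Real.sqrt_nonneg _
  have hδ₂0 : 0 ≤ δ₂ := Real.sqrt_nonneg _
  have hδ₃0 : 0 ≤ δ₃ := Real.sqrt_nonneg _
  have c₁ := close ξ hsum hξ α₁ S
  have c₂ := close ξ hsum hξ α₂ S
  have c₃ := close ξ hsum hξ α₃ S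
  rw [← hδ₁] at c₁
  rw [← hδ₂] at c₂
  rw [← hδ₃] at c₃
  rw [← hm] at c₁ c₂ c₃
  set B₁ := ∑' s : S, ‖ξ (α₁ s)‖ ^ 2 with hB₁
  set B₂ := ∑' s : S, ‖ξ (α₂ s)‖ ^ 2 with hB₂
  set B₃ := ∑' s : S, ‖ξ (α₃ s)‖ ^ 2 with hB₃
  -- summability of indicator pieces
  have hsumα : ∀ α : F₂ ≃ F₂, Summable fun g => ‖ξ (α g)‖ ^ 2 := fun α =>
    (Equiv.summable_iff α (f := fun g => ‖ξ g‖ ^ 2)).mpr hsum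
  -- lower bound : S ∪ α₃ '' S = univ
  have cover : ∀ g : F₂, g ∈ S ∨ g ∈ α₃ '' S := by
    intro g
    by_cases hg : g ∈ S
    · exact Or.inl hg
    · right
      refine ⟨g₂ * g * g₁⁻¹, factA g hg, ?_⟩
      rw [hα₃]
      group
  have lower : 1 ≤ m + B₃ := by
    have hB₃' : B₃ = ∑' g : (α₃ '' S : Set F₂), ‖ξ g‖ ^ 2 := (tsum_image_eq ξ α₃ S).symm
    rw [hm, hB₃', tsum_subtype S (fun g : F₂ => ‖ξ g‖ ^ 2),
      tsum_subtype (⇑α₃ '' S) (fun g : F₂ => ‖ξ g‖ ^ 2), ← Summable.tsum_add (hsum.indicator S)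
      (hsum.indicator (α₃ '' S)), ← hξ]
    apply Summable.tsum_le_tsum _ hsum ((hsum.indicator S).add (hsum.indicator (α₃ '' S)))
    intro g
    rcases cover g with hg | hg
    · have := Set.indicator_of_mem hg (fun g => ‖ξ g‖ ^ 2)
      have h0 : 0 ≤ (α₃ '' S).indicator (fun g => ‖ξ g‖ ^ 2) g :=
        Set.indicator_nonneg (fun x _ => by positivity) g
      rw [this]
      linarith
    · have := Set.indicator_of_mem hg (fun g => ‖ξ g‖ ^ 2)
      have h0 : 0 ≤ S.indicator (fun g => ‖ξ g‖ ^ 2) g :=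
        Set.indicator_nonneg (fun x _ => by positivity) g
      rw [this]
      linarith
  -- upper bound : S, α₁ '' S, α₂ '' S pairwise disjoint
  have disj1 : ∀ g : F₂, g ∈ S → g ∉ α₁ '' S := by
    rintro g hg ⟨s, hs, rfl⟩
    exact factB s hs (by rw [← hα₁ s]; exact hg)
  have disj2 : ∀ g : F₂, g ∈ S → g ∉ α₂ '' S := by
    rintro g hg ⟨s, hs, rfl⟩
    exact factB' s hs (by rw [← hα₂ s]; exact hg)
  have disj3 : ∀ g : F₂, g ∈ α₁ '' S → g ∉ α₂ '' S := by
    rintro g ⟨s, hs, rfl⟩ ⟨t, ht, het⟩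
    -- α₂ t = α₁ s  ⇒  t = g₁⁻¹ * (α₁ s) * g₂ = g₁⁻¹ * (g₁⁻¹ * s * g₂) * g₂ ∉ S
    apply factC s hs
    have : t = g₁⁻¹ * (g₁⁻¹ * s * g₂) * g₂ := by
      rw [← hα₁ s, ← het, hα₂]
      group
    rw [← this]
    exact ht
  have upper : m + B₁ + B₂ ≤ 1 := by
    have e1 : B₁ = ∑' g : (α₁ '' S : Set F₂), ‖ξ g‖ ^ 2 := (tsum_image_eq ξ α₁ S).symm
    have e2 : B₂ = ∑' g : (α₂ '' S : Set F₂), ‖ξ g‖ ^ 2 := (tsum_image_eq ξ α₂ S).symm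
    rw [hm, e1, e2, tsum_subtype S (fun g : F₂ => ‖ξ g‖ ^ 2),
      tsum_subtype (⇑α₁ '' S) (fun g : F₂ => ‖ξ g‖ ^ 2),
      tsum_subtype (⇑α₂ '' S) (fun g : F₂ => ‖ξ g‖ ^ 2),
      ← Summable.tsum_add (hsum.indicator S) (hsum.indicator (α₁ '' S)),
      ← Summable.tsum_add ((hsum.indicator S).add (hsum.indicator (α₁ '' S)))
        (hsum.indicator (α₂ '' S)), ← hξ]
    apply Summable.tsum_le_tsum _ (((hsum.indicator S).add (hsum.indicator (α₁ '' S))).add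
      (hsum.indicator (α₂ '' S))) hsum
    intro g
    by_cases hg1 : g ∈ S
    · rw [Set.indicator_of_mem hg1, Set.indicator_of_notMem (disj1 g hg1),
        Set.indicator_of_notMem (disj2 g hg1)]
      simp
    · rw [Set.indicator_of_notMem hg1]
      by_cases hg2 : g ∈ α₁ '' S
      · rw [Set.indicator_of_mem hg2, Set.indicator_of_notMem (disj3 g hg2)]
        simp
      · rw [Set.indicator_of_notMem hg2]
        by_cases hg3 : g ∈ α₂ '' S
        · rw [Set.indicator_of_mem hg3]; simp
        · rw [Set.indicator_of_notMem hg3]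
          simp only [add_zero, zero_add]
          positivity
  rw [abs_sub_le_iff] at c₁ c₂ c₃
  constructor
  · -- 1 ≤ m + B₃ ≤ 2m + 2δ₃ < 2m + 2ε
    have : B₃ ≤ m + 2 * δ₃ := by linarith [c₃.1]
    linarith
  · -- m + B₁ + B₂ ≥ 3m - 2δ₁ - 2δ₂
    have e1 : m - 2 * δ₁ ≤ B₁ := by linarith [c₁.2]
    have e2 : m - 2 * δ₂ ≤ B₂ := by linarith [c₂.2]
    linarith
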